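/- Every formula of hypergraph graded modal logic (HGML) can be translated into an equivalent formula of the restricted fragment HGML_r: for every HGML formula φ(x) over a vocabulary of relation types R with arities and node colors C, there exists an HGML_r formula φ'(x) such that for every relational hypergraph G over this vocabulary and every node v of G, G ⊨ φ(v) if and only if G ⊨ φ'(v). -/

import Mathlib

structure RelHG (V R : Type) (ar : R → ℕ) where
  edges : Finset (Σ r : R, Fin (ar r) → V)

mutual
/-- Formulas of hypergraph graded modal logic (HGML) over relation types `R` with
arities `ar` and node colors `C`.  `count r i N hN Ψ` is the formula
`∃^{≥N} ỹ (r(y₁,…,y_{i-1},x,y_{i+1},…,y_{ar r}) ∧ Ψ(ỹ))` where `N ≥ 1`. -/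
inductive HGML (R C : Type) (ar : R → ℕ) : Type where
  | color : C → HGML R C ar
  | fnot : HGML R C ar → HGML R C ar
  | fand : HGML R C ar → HGML R C ar → HGML R C ar
  | count : (r : R) → (i : Fin (ar r)) → (N : ℕ) → 1 ≤ N →
      BComb R C ar (ar r) i → HGML R C ar

/-- Boolean combinations of HGML formulas whose free variables range over the
positions `j ≠ i` of a relation of arity `k` (the tuple `ỹ`). -/
inductive BComb (R C : Type) (ar : R → ℕ) : (k : ℕ) → Fin k → Type where
  | atom : {k : ℕ} → {i : Fin k} → (j : Fin k) → j ≠ i → HGML R C ar → BComb R C ar k i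
  | bnot : {k : ℕ} → {i : Fin k} → BComb R C ar k i → BComb R C ar k i
  | band : {k : ℕ} → {i : Fin k} → BComb R C ar k i → BComb R C ar k i →
      BComb R C ar k i
end

variable {V R C : Type} {ar : R → ℕ}

mutual
/-- Satisfaction `G ⊨ φ(v)` of an HGML formula at a node of a relational
hypergraph `H` with node coloring `c`.  In the counting case we count full tuples
`w : Fin (ar r) → V` with `w i = v`, which are in bijection with the tuples `ỹ`. -/
def HGML.sat (H : RelHG V R ar) (c : V → C) : HGML R C ar → V → Prop
  | .color a, v => c v = a
  | .fnot φ, v => ¬ HGML.sat H c φ v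
  | .fand φ ψ, v => HGML.sat H c φ v ∧ HGML.sat H c ψ v
  | .count r i N _ Ψ, v =>
      ∃ s : Finset (Fin (ar r) → V),
        N ≤ s.card ∧ ∀ w ∈ s, w i = v ∧
          (⟨r, w⟩ : Σ r' : R, Fin (ar r') → V) ∈ H.edges ∧ BComb.sat H c Ψ w

/-- Satisfaction of a Boolean combination under an assignment `w` of the variables. -/
def BComb.sat (H : RelHG V R ar) (c : V → C) :
    {k : ℕ} → {i : Fin k} → BComb R C ar k i → (Fin k → V) → Prop
  | _, _, .atom j _ φ, w => HGML.sat H c φ (w j)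
  | _, _, .bnot Ψ, w => ¬ BComb.sat H c Ψ w
  | _, _, .band Ψ₁ Ψ₂, w => BComb.sat H c Ψ₁ w ∧ BComb.sat H c Ψ₂ w
end

/-- Formulas of the restricted fragment HGML_r: as HGML, except that in the counting
case the body is a conjunction `⋀_{j ≠ i} φ_j(y_j)` of HGML_r formulas, one per free
variable. -/
inductive HGMLr (R C : Type) (ar : R → ℕ) : Type where
  | color : C → HGMLr R C ar
  | fnot : HGMLr R C ar → HGMLr R C ar
  | fand : HGMLr R C ar → HGMLr R C ar → HGMLr R C ar
  | count : (r : R) → (i : Fin (ar r)) → (N : ℕ) → 1 ≤ N →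
      ((j : Fin (ar r)) → j ≠ i → HGMLr R C ar) → HGMLr R C ar

/-- Satisfaction of an HGML_r formula at a node of a relational hypergraph. -/
def HGMLr.sat (H : RelHG V R ar) (c : V → C) : HGMLr R C ar → V → Prop
  | .color a, v => c v = a
  | .fnot φ, v => ¬ HGMLr.sat H c φ v
  | .fand φ ψ, v => HGMLr.sat H c φ v ∧ HGMLr.sat H c ψ v
  | .count r i N _ Φ, v =>
      ∃ s : Finset (Fin (ar r) → V),
        N ≤ s.card ∧ ∀ w ∈ s, w i = v ∧
          (⟨r, w⟩ : Σ r' : R, Fin (ar r') → V) ∈ H.edges ∧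
          ∀ (j : Fin (ar r)) (hj : j ≠ i), HGMLr.sat H c (Φ j hj) (w j)

/-- Evaluation of a Boolean combination relative to an abstract assignment of
truth values to atoms. -/
def BComb.eval : {k : ℕ} → {i : Fin k} → (∀ _ : Fin k, HGML R C ar → Prop) →
    BComb R C ar k i → Prop
  | _, _, σ, .atom j _ φ => σ j φ
  | _, _, σ, .bnot Ψ => ¬ BComb.eval σ Ψ
  | _, _, σ, .band Ψ₁ Ψ₂ => BComb.eval σ Ψ₁ ∧ BComb.eval σ Ψ₂

/-- The list of atoms of a Boolean combination. -/
def BComb.atoms : {k : ℕ} → {i : Fin k} → BComb R C ar k i →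
    List (Fin k × HGML R C ar)
  | _, _, .atom j _ φ => [(j, φ)]
  | _, _, .bnot Ψ => Ψ.atoms
  | _, _, .band Ψ₁ Ψ₂ => Ψ₁.atoms ++ Ψ₂.atoms

theorem BComb.atoms_ne : ∀ {k : ℕ} {i : Fin k} (Ψ : BComb R C ar k i),
    ∀ pr ∈ Ψ.atoms, pr.1 ≠ i
  | _, _, .atom j h φ => by simp [BComb.atoms]; exact h
  | _, _, .bnot Ψ => Ψ.atoms_ne
  | _, _, .band Ψ₁ Ψ₂ => by
      intro pr hpr
      rcases List.mem_append.1 hpr with h | h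
      · exact Ψ₁.atoms_ne pr h
      · exact Ψ₂.atoms_ne pr h

theorem BComb.sat_eq_eval (H : RelHG V R ar) (c : V → C) :
    ∀ {k : ℕ} {i : Fin k} (Ψ : BComb R C ar k i) (w : Fin k → V),
    BComb.sat H c Ψ w ↔ BComb.eval (fun j φ => HGML.sat H c φ (w j)) Ψ
  | _, _, .atom j h φ, w => Iff.rfl
  | _, _, .bnot Ψ, w => by
      rw [BComb.sat, BComb.eval]; exact not_congr (BComb.sat_eq_eval H c Ψ w)
  | _, _, .band Ψ₁ Ψ₂, w => by
      rw [BComb.sat, BComb.eval]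
      exact and_congr (BComb.sat_eq_eval H c Ψ₁ w) (BComb.sat_eq_eval H c Ψ₂ w)

theorem BComb.eval_congr :
    ∀ {k : ℕ} {i : Fin k} {σ σ' : ∀ _ : Fin k, HGML R C ar → Prop}
    (Ψ : BComb R C ar k i),
    (∀ pr ∈ Ψ.atoms, (σ pr.1 pr.2 ↔ σ' pr.1 pr.2)) →
    (BComb.eval σ Ψ ↔ BComb.eval σ' Ψ)
  | _, _, _, _, .atom j h φ, hσ => by
      rw [BComb.eval, BComb.eval]
      exact hσ (j, φ) (by simp [BComb.atoms])
  | _, _, _, _, .bnot Ψ, hσ => by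
      rw [BComb.eval, BComb.eval]
      exact not_congr (BComb.eval_congr Ψ hσ)
  | _, _, _, _, .band Ψ₁ Ψ₂, hσ => by
      rw [BComb.eval, BComb.eval]
      refine and_congr (BComb.eval_congr Ψ₁ fun pr h => hσ pr ?_)
        (BComb.eval_congr Ψ₂ fun pr h => hσ pr ?_) <;>
        simp [BComb.atoms, h]

mutual
/-- Extract some color occurring in an HGML formula. -/
def HGML.colorOf : HGML R C ar → C
  | .color a => a
  | .fnot φ => φ.colorOf
  | .fand φ _ => φ.colorOf
  | .count _ _ _ _ Ψ => Ψ.colorOf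

def BComb.colorOf : {k : ℕ} → {i : Fin k} → BComb R C ar k i → C
  | _, _, .atom _ _ φ => φ.colorOf
  | _, _, .bnot Ψ => Ψ.colorOf
  | _, _, .band Ψ _ => Ψ.colorOf
end

/-- A valid formula of HGML_r. -/
def HGMLr.tt (a : C) : HGMLr R C ar := .fnot (.fand (.color a) (.fnot (.color a)))

theorem HGMLr.sat_tt (a : C) (H : RelHG V R ar) (c : V → C) (v : V) :
    HGMLr.sat H c (HGMLr.tt a) v := by
  rw [HGMLr.tt, HGMLr.sat, HGMLr.sat, HGMLr.sat, HGMLr.sat]; tauto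

/-- An unsatisfiable formula of HGML_r. -/
def HGMLr.ff (a : C) : HGMLr R C ar := .fnot (HGMLr.tt a)

theorem HGMLr.sat_ff (a : C) (H : RelHG V R ar) (c : V → C) (v : V) :
    ¬ HGMLr.sat H c (HGMLr.ff a) v := by
  rw [HGMLr.ff, HGMLr.sat]; simp [HGMLr.sat_tt]

def HGMLr.bigAnd (a : C) (l : List (HGMLr R C ar)) : HGMLr R C ar :=
  l.foldr .fand (HGMLr.tt a)

theorem HGMLr.sat_bigAnd (a : C) (H : RelHG V R ar) (c : V → C) (v : V)
    (l : List (HGMLr R C ar)) :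
    HGMLr.sat H c (HGMLr.bigAnd a l) v ↔ ∀ ψ ∈ l, HGMLr.sat H c ψ v := by
  induction l with
  | nil => simp [HGMLr.bigAnd, HGMLr.sat_tt]
  | cons ψ l ih =>
      rw [HGMLr.bigAnd] at ih ⊢
      rw [List.foldr_cons, HGMLr.sat, ih]
      simp

def HGMLr.bor (φ ψ : HGMLr R C ar) : HGMLr R C ar := .fnot (.fand (.fnot φ) (.fnot ψ))

theorem HGMLr.sat_bor (H : RelHG V R ar) (c : V → C) (v : V) (φ ψ : HGMLr R C ar) :
    HGMLr.sat H c (HGMLr.bor φ ψ) v ↔ HGMLr.sat H c φ v ∨ HGMLr.sat H c ψ v := by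
  rw [HGMLr.bor, HGMLr.sat, HGMLr.sat, HGMLr.sat, HGMLr.sat]; tauto

def HGMLr.bigOr (a : C) (l : List (HGMLr R C ar)) : HGMLr R C ar :=
  l.foldr HGMLr.bor (HGMLr.ff a)

theorem HGMLr.sat_bigOr (a : C) (H : RelHG V R ar) (c : V → C) (v : V)
    (l : List (HGMLr R C ar)) :
    HGMLr.sat H c (HGMLr.bigOr a l) v ↔ ∃ ψ ∈ l, HGMLr.sat H c ψ v := by
  induction l with
  | nil => simp [HGMLr.bigOr, HGMLr.sat_ff]
  | cons ψ l ih =>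
      rw [HGMLr.bigOr] at ih ⊢
      rw [List.foldr_cons, HGMLr.sat_bor, ih]
      simp

open Finset in
theorem exists_finset_card_iff {A : Type} [Fintype A] (N : ℕ) (Q : A → Prop)
    [DecidablePred Q] :
    (∃ s : Finset A, N ≤ s.card ∧ ∀ w ∈ s, Q w) ↔
      N ≤ (Finset.univ.filter Q).card := by
  constructor
  · rintro ⟨s, hs, hQ⟩
    exact hs.trans (Finset.card_le_card fun w hw => by
      simp only [Finset.mem_filter, Finset.mem_univ, true_and]; exact hQ w hw)
  · intro h
    exact ⟨Finset.univ.filter Q, h, fun w hw => (Finset.mem_filter.1 hw).2⟩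

theorem exists_sum_partition {ι : Type} [DecidableEq ι] (s : Finset ι) (a : ι → ℕ) :
    ∀ N : ℕ, N ≤ ∑ t ∈ s, a t →
    ∃ g : ι → ℕ, (∀ t, g t ≤ a t) ∧ (∀ t ∉ s, g t = 0) ∧ ∑ t ∈ s, g t = N := by
  induction s using Finset.induction_on with
  | empty =>
      intro N hN
      simp only [Finset.sum_empty, Nat.le_zero] at hN
      exact ⟨fun _ => 0, fun _ => Nat.zero_le _, fun _ _ => rfl, by simp [hN]⟩
  | @insert t₀ s ht₀ ih =>
      intro N hN
      rw [Finset.sum_insert ht₀] at hN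
      obtain ⟨g, hg1, hg2, hg3⟩ := ih (N - min (a t₀) N) (by omega)
      refine ⟨Function.update g t₀ (min (a t₀) N), ?_, ?_, ?_⟩
      · intro t
        rcases eq_or_ne t t₀ with rfl | h
        · simp [Function.update_self]
        · simp [Function.update_of_ne h, hg1 t]
      · intro t ht
        simp only [Finset.mem_insert, not_or] at ht
        rw [Function.update_of_ne ht.1]
        exact hg2 t ht.2
      · rw [Finset.sum_insert ht₀, Function.update_self,
          Finset.sum_congr rfl fun t ht =>
            Function.update_of_ne (fun h : t = t₀ => ht₀ (h ▸ ht)) _ g, hg3]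
        omega

/-- Graded modality allowing threshold `0` (which is trivially true). -/
def HGMLr.countLe (a : C) (r : R) (i : Fin (ar r)) (m : ℕ)
    (Φ : ∀ j : Fin (ar r), j ≠ i → HGMLr R C ar) : HGMLr R C ar :=
  if h : 1 ≤ m then .count r i m h Φ else HGMLr.tt a

theorem HGMLr.sat_countLe (a : C) (r : R) (i : Fin (ar r)) (m : ℕ)
    (Φ : ∀ j : Fin (ar r), j ≠ i → HGMLr R C ar)
    (H : RelHG V R ar) (c : V → C) (v : V) :
    HGMLr.sat H c (HGMLr.countLe a r i m Φ) v ↔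
      ∃ s : Finset (Fin (ar r) → V), m ≤ s.card ∧ ∀ w ∈ s, w i = v ∧
        (⟨r, w⟩ : Σ r' : R, Fin (ar r') → V) ∈ H.edges ∧
        ∀ (j : Fin (ar r)) (hj : j ≠ i), HGMLr.sat H c (Φ j hj) (w j) := by
  rw [HGMLr.countLe]
  split_ifs with h
  · rw [HGMLr.sat]
  · have hm : m = 0 := by omega
    subst hm
    simp only [HGMLr.sat_tt, true_iff]
    exact ⟨∅, by simp⟩

/-- The property that an HGML_r formula is equivalent to a given HGML formula. -/
def Good (φ : HGML R C ar) (φ' : HGMLr R C ar) : Prop :=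
  ∀ (V : Type) (_ : Fintype V) (H : RelHG V R ar) (c : V → C) (v : V),
    HGML.sat H c φ v ↔ HGMLr.sat H c φ' v

open Finset in
theorem count_case (a : C) (r : R) (i : Fin (ar r)) (N : ℕ) (hN : 1 ≤ N)
    (Ψ : BComb R C ar (ar r) i)
    (ih : ∀ pr ∈ Ψ.atoms, ∃ φ' : HGMLr R C ar, Good pr.2 φ') :
    ∃ φ' : HGMLr R C ar, Good (.count r i N hN Ψ) φ' := by
  classical
  choose tr htr using fun p : Fin Ψ.atoms.length =>
    ih (Ψ.atoms.get p) (Ψ.atoms.get_mem p)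
  let n := Ψ.atoms.length
  let χ : (Fin n → Bool) → Fin (ar r) → HGMLr R C ar := fun t j =>
    HGMLr.bigAnd a (((List.finRange n).map fun p =>
      if (Ψ.atoms.get p).1 = j then (if t p then tr p else .fnot (tr p))
      else HGMLr.tt a))
  let Ψev : (Fin n → Bool) → Prop := fun t =>
    BComb.eval (fun j φ0 => ∃ p : Fin n, Ψ.atoms.get p = (j, φ0) ∧ t p = true) Ψ
  let goodT : Finset (Fin n → Bool) := Finset.univ.filter Ψev
  let D : Finset ((Fin n → Bool) → Fin (N + 1)) :=
    Finset.univ.filter fun g => ∑ t ∈ goodT, (g t : ℕ) = N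
  refine ⟨HGMLr.bigOr a (D.toList.map fun g =>
    HGMLr.bigAnd a (goodT.toList.map fun t =>
      HGMLr.countLe a r i (g t) fun j _ => χ t j)), ?_⟩
  intro V iV H c v
  let θ : (Fin (ar r) → V) → (Fin n → Bool) := fun w p =>
    decide (HGML.sat H c (Ψ.atoms.get p).2 (w (Ψ.atoms.get p).1))
  have hθ : ∀ (w : Fin (ar r) → V) (p : Fin n),
      θ w p = true ↔ HGML.sat H c (Ψ.atoms.get p).2 (w (Ψ.atoms.get p).1) := by
    intro w p; simp [θ]
  let S : (Fin n → Bool) → Finset (Fin (ar r) → V) := fun t =>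
    Finset.univ.filter fun w => w i = v ∧
      (⟨r, w⟩ : Σ r' : R, Fin (ar r') → V) ∈ H.edges ∧ θ w = t
  -- K1 : satisfaction of Ψ only depends on the type of the tuple
  have K1 : ∀ w : Fin (ar r) → V, BComb.sat H c Ψ w ↔ Ψev (θ w) := by
    intro w
    rw [BComb.sat_eq_eval]
    apply BComb.eval_congr
    rintro ⟨j, φ0⟩ hpr
    simp only
    constructor
    · intro hs
      obtain ⟨p, hp⟩ := List.mem_iff_get.1 hpr
      exact ⟨p, hp, by rw [hθ, hp]; exact hs⟩
    · rintro ⟨p, hp, hpt⟩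
      rw [hθ, hp] at hpt
      exact hpt
  -- K2 : the characteristic formulas define the type of the tuple
  have K2 : ∀ (w : Fin (ar r) → V) (t : Fin n → Bool),
      (∀ (j : Fin (ar r)) (hj : j ≠ i), HGMLr.sat H c (χ t j) (w j)) ↔ θ w = t := by
    intro w t
    constructor
    · intro h
      funext p
      have hne : (Ψ.atoms.get p).1 ≠ i := Ψ.atoms_ne _ (Ψ.atoms.get_mem p)
      have h2 := (HGMLr.sat_bigAnd a H c (w (Ψ.atoms.get p).1) _).1
        (h (Ψ.atoms.get p).1 hne) (if t p then tr p else .fnot (tr p))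
        (List.mem_map.2 ⟨p, List.mem_finRange p, by simp⟩)
      cases hpt : t p with
      | true =>
          rw [hpt, if_pos rfl] at h2
          rw [hθ]
          exact (htr p V iV H c _).2 h2
      | false =>
          rw [hpt, if_neg Bool.false_ne_true] at h2
          rw [HGMLr.sat] at h2
          rw [← Bool.not_eq_true, hθ]
          intro hs
          exact h2 ((htr p V iV H c _).1 hs)
    · intro h j hj
      rw [HGMLr.sat_bigAnd]
      intro ψ hψ
      obtain ⟨p, -, hp⟩ := List.mem_map.1 hψ
      by_cases hc : (Ψ.atoms.get p).1 = j
      · rw [if_pos hc] at hp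
        have hpt : θ w p = t p := congrFun h p
        subst hp
        cases ht : t p with
        | true =>
            rw [if_pos rfl]
            rw [ht] at hpt
            have := (hθ w p).1 hpt
            rw [hc] at this
            exact (htr p V iV H c (w j)).1 this
        | false =>
            rw [if_neg Bool.false_ne_true, HGMLr.sat]
            intro hs
            have : θ w p = true := (hθ w p).2 (by rw [hc]; exact (htr p V iV H c (w j)).2 hs)
            rw [hpt, ht] at this
            exact Bool.false_ne_true this
      · rw [if_neg hc] at hp
        subst hp
        exact HGMLr.sat_tt a H c (w j)
  -- K3 : counting satisfying tuples by type
  have K3 : (Finset.univ.filter fun w : Fin (ar r) → V => w i = v ∧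
      (⟨r, w⟩ : Σ r' : R, Fin (ar r') → V) ∈ H.edges ∧ BComb.sat H c Ψ w).card =
      ∑ t ∈ goodT, (S t).card := by
    rw [← Finset.card_biUnion]
    · congr 1
      ext w
      simp only [S, goodT, Finset.mem_filter, Finset.mem_univ, true_and,
        Finset.mem_biUnion]
      constructor
      · rintro ⟨h1, h2, h3⟩
        exact ⟨θ w, (K1 w).1 h3, h1, h2, rfl⟩
      · rintro ⟨t, ht, h1, h2, h3⟩
        exact ⟨h1, h2, (K1 w).2 (h3 ▸ ht)⟩
    · intro t₁ _ t₂ _ hne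
      rw [Function.onFun, Finset.disjoint_left]
      intro w hw₁ hw₂
      simp only [S, Finset.mem_filter] at hw₁ hw₂
      exact hne (hw₁.2.2.2 ▸ hw₂.2.2.2 ▸ rfl)
  -- semantics of each conjunct
  have hc2 : ∀ (m : ℕ) (t : Fin n → Bool),
      HGMLr.sat H c (HGMLr.countLe a r i m fun j _ => χ t j) v ↔ m ≤ (S t).card := by
    intro m t
    rw [HGMLr.sat_countLe]
    have : ∀ w : Fin (ar r) → V,
        (w i = v ∧ (⟨r, w⟩ : Σ r' : R, Fin (ar r') → V) ∈ H.edges ∧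
          ∀ (j : Fin (ar r)) (hj : j ≠ i), HGMLr.sat H c (χ t j) (w j)) ↔
        (w i = v ∧ (⟨r, w⟩ : Σ r' : R, Fin (ar r') → V) ∈ H.edges ∧ θ w = t) := by
      intro w
      exact and_congr_right fun _ => and_congr_right fun _ => K2 w t
    rw [exists_congr fun s => and_congr_right fun _ =>
      forall_congr' fun w => forall_congr' fun _ => this w]
    rw [exists_finset_card_iff]
  -- semantics of the big disjunction
  have R1 : HGMLr.sat H c (HGMLr.bigOr a (D.toList.map fun g =>
      HGMLr.bigAnd a (goodT.toList.map fun t =>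
        HGMLr.countLe a r i (g t) fun j _ => χ t j))) v ↔
      ∃ g ∈ D, ∀ t ∈ goodT, (g t : ℕ) ≤ (S t).card := by
    rw [HGMLr.sat_bigOr]
    constructor
    · rintro ⟨ψ, hψ, hsat⟩
      obtain ⟨g, hg, rfl⟩ := List.mem_map.1 hψ
      refine ⟨g, Finset.mem_toList.1 hg, fun t ht => ?_⟩
      rw [HGMLr.sat_bigAnd] at hsat
      exact (hc2 (g t) t).1 (hsat _ (List.mem_map.2 ⟨t, Finset.mem_toList.2 ht, rfl⟩))
    · rintro ⟨g, hg, hle⟩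
      refine ⟨_, List.mem_map.2 ⟨g, Finset.mem_toList.2 hg, rfl⟩, ?_⟩
      rw [HGMLr.sat_bigAnd]
      intro ψ hψ
      obtain ⟨t, ht, rfl⟩ := List.mem_map.1 hψ
      exact (hc2 (g t) t).2 (hle t (Finset.mem_toList.1 ht))
  -- the arithmetic core
  have R2 : (∃ g ∈ D, ∀ t ∈ goodT, (g t : ℕ) ≤ (S t).card) ↔
      N ≤ ∑ t ∈ goodT, (S t).card := by
    constructor
    · rintro ⟨g, hg, hle⟩
      have hsum : ∑ t ∈ goodT, (g t : ℕ) = N := by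
        simpa [D] using hg
      calc N = ∑ t ∈ goodT, (g t : ℕ) := hsum.symm
        _ ≤ ∑ t ∈ goodT, (S t).card := Finset.sum_le_sum hle
    · intro h
      obtain ⟨g0, hg1, hg2, hg3⟩ := exists_sum_partition goodT (fun t => (S t).card) N h
      have hbound : ∀ t, g0 t ≤ N := by
        intro t
        by_cases ht : t ∈ goodT
        · rw [← hg3]
          exact Finset.single_le_sum (fun _ _ => Nat.zero_le _) ht
        · rw [hg2 t ht]; exact Nat.zero_le _
      refine ⟨fun t => ⟨g0 t, Nat.lt_succ_of_le (hbound t)⟩, ?_, fun t _ => hg1 t⟩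
      simp only [D, Finset.mem_filter, Finset.mem_univ, true_and]
      exact hg3
  -- left-hand side
  have L1 : HGML.sat H c (.count r i N hN Ψ) v ↔
      N ≤ (Finset.univ.filter fun w : Fin (ar r) → V => w i = v ∧
        (⟨r, w⟩ : Σ r' : R, Fin (ar r') → V) ∈ H.edges ∧ BComb.sat H c Ψ w).card := by
    rw [HGML.sat]
    exact exists_finset_card_iff N _
  rw [L1, K3, R1, R2]

theorem key (a : C) (φ : HGML R C ar) : ∃ φ' : HGMLr R C ar, Good φ φ' := by
  induction φ using HGML.rec
    (motive_2 := fun k i Ψ => ∀ pr ∈ BComb.atoms Ψ, ∃ φ' : HGMLr R C ar, Good pr.2 φ')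
    with
  | color a0 => exact ⟨.color a0, fun V _ H c v => Iff.rfl⟩
  | fnot φ ihφ =>
      obtain ⟨φ', h⟩ := ihφ
      exact ⟨.fnot φ', fun V iV H c v => by
        rw [HGML.sat, HGMLr.sat]; exact not_congr (h V iV H c v)⟩
  | fand φ ψ ihφ ihψ =>
      obtain ⟨φ', hφ⟩ := ihφ
      obtain ⟨ψ', hψ⟩ := ihψ
      exact ⟨.fand φ' ψ', fun V iV H c v => by
        rw [HGML.sat, HGMLr.sat]
        exact and_congr (hφ V iV H c v) (hψ V iV H c v)⟩
  | count r i N hN Ψ ihΨ => exact count_case a r i N hN Ψ ihΨ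
  | atom j hne φ0 ihφ =>
      rename_i pr hpr
      simp only [BComb.atoms, List.mem_singleton] at hpr
      subst hpr
      exact ihφ
  | bnot Ψ ihΨ =>
      rename_i pr hpr
      exact ihΨ pr hpr
  | band Ψ₁ Ψ₂ ih₁ ih₂ =>
      rename_i pr hpr
      rw [BComb.atoms, List.mem_append] at hpr
      rcases hpr with h | h
      · exact ih₁ pr h
      · exact ih₂ pr h

/-- Every HGML formula can be translated into an equivalent HGML_r
formula: over a fixed vocabulary of relation types `R` with arities `ar` and node
colors `C`, for every HGML formula `φ(x)` there is an HGML_r formula `φ'(x)` that is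
satisfied by exactly the same nodes of every relational hypergraph. -/
theorem hgml_to_hgmlr
    {R C : Type} [Fintype R] [Fintype C] {ar : R → ℕ} (har : ∀ r : R, 1 ≤ ar r)
    (φ : HGML R C ar) :
    ∃ φ' : HGMLr R C ar,
      ∀ (V : Type) [Fintype V] (H : RelHG V R ar) (c : V → C) (v : V),
        HGML.sat H c φ v ↔ HGMLr.sat H c φ' v := by
  obtain ⟨φ', h⟩ := key φ.colorOf φ
  exact ⟨φ', fun V iV H c v => h V iV H c v⟩
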